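/- Let v be a monotone TU-game on N, S ⊆ N with |S| ≥ 2, T ⊆ N∖S, with v(S∪T) > v(T), and let p_S have full support on the 2-partitions of S. Then A^v_p(S,T) = v(T) - v(S∪T) if and only if v(P∪T) = v(S∪T) for every nonempty P ⊆ S (i.e., S is a fully complementary T-contributing coalition). -/
import Mathlib


open Finset

/-- The set of unordered 2-partitions of `S` into two nonempty disjoint parts. -/
def Pi2 {ι : Type*} [DecidableEq ι] (S : Finset ι) : Finset (Finset (Finset ι)) :=
  (S.powerset.filter fun R => R ≠ ∅ ∧ R ≠ S).image fun R => {R, S \ R}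

/-- The attitude of coalition `S` towards `T` under internal distribution `p` on `Pi2 S`. -/
def attitude {ι : Type*} [DecidableEq ι] (v : Finset ι → ℝ) (p : Finset (Finset ι) → ℝ)
    (S T : Finset ι) : ℝ :=
  v (S ∪ T) - v T - ∑ π ∈ Pi2 S, p π * ((∑ B ∈ π, v (B ∪ T)) - 2 * v T)

lemma Pi2_mem_iff {ι : Type*} [DecidableEq ι] {S : Finset ι} {π : Finset (Finset ι)} :
    π ∈ Pi2 S ↔ ∃ R, R ⊆ S ∧ R ≠ ∅ ∧ R ≠ S ∧ π = {R, S \ R} := by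
  unfold Pi2
  simp only [mem_image, mem_filter, mem_powerset]
  constructor
  · rintro ⟨R, ⟨h1, h2, h3⟩, rfl⟩; exact ⟨R, h1, h2, h3, rfl⟩
  · rintro ⟨R, h1, h2, h3, rfl⟩; exact ⟨R, ⟨h1, h2, h3⟩, rfl⟩

lemma ne_sdiff_self {ι : Type*} [DecidableEq ι] {R S : Finset ι} (hR : R ≠ ∅) :
    R ≠ S \ R := by
  intro he
  obtain ⟨x, hx⟩ := nonempty_iff_ne_empty.2 hR
  have hx' : x ∈ S \ R := he ▸ hx
  exact (mem_sdiff.1 hx').2 hx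

theorem attitude_eq_neg_marginal_iff_fully_complementary {ι : Type*} [DecidableEq ι]
    (N S T : Finset ι) (v : Finset ι → ℝ) (p : Finset (Finset ι) → ℝ)
    (hv0 : v ∅ = 0) (hmono : ∀ A B : Finset ι, A ⊆ B → B ⊆ N → v A ≤ v B)
    (hSN : S ⊆ N) (h2 : 2 ≤ S.card) (hT : T ⊆ N \ S)
    (hcontrib : v T < v (S ∪ T))
    (hp1 : ∑ π ∈ Pi2 S, p π = 1) (hppos : ∀ π ∈ Pi2 S, 0 < p π) :
    attitude v p S T = v T - v (S ∪ T) ↔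
      ∀ P : Finset ι, P ⊆ S → P ≠ ∅ → v (P ∪ T) = v (S ∪ T) := by
  have hTN : T ⊆ N := hT.trans (sdiff_subset)
  have hSTN : S ∪ T ⊆ N := union_subset hSN hTN
  have hsub : ∀ R : Finset ι, R ⊆ S → v (R ∪ T) ≤ v (S ∪ T) := fun R hR =>
    hmono _ _ (union_subset_union_left hR) hSTN
  -- sum over a 2-partition
  have hsum : ∀ R : Finset ι, R ⊆ S → R ≠ ∅ →
      (∑ B ∈ ({R, S \ R} : Finset (Finset ι)), v (B ∪ T))
        = v (R ∪ T) + v ((S \ R) ∪ T) := by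
    intro R hR hRne
    exact Finset.sum_pair (ne_sdiff_self hRne)
  have hterm_le : ∀ π ∈ Pi2 S,
      (∑ B ∈ π, v (B ∪ T)) - 2 * v T ≤ 2 * (v (S ∪ T) - v T) := by
    intro π hπ
    obtain ⟨R, hR, hRne, hRS, rfl⟩ := Pi2_mem_iff.1 hπ
    rw [hsum R hR hRne]
    have h1 := hsub R hR
    have h2 := hsub (S \ R) (sdiff_subset)
    linarith
  unfold attitude
  constructor
  · intro h P hPS hPne
    rcases eq_or_ne P S with rfl | hPS'
    · rfl
    have hπ : ({P, S \ P} : Finset (Finset ι)) ∈ Pi2 S :=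
      Pi2_mem_iff.2 ⟨P, hPS, hPne, hPS', rfl⟩
    -- the weighted sum equals its max, so each term attains it
    have hsum_eq : ∑ π ∈ Pi2 S, p π * ((∑ B ∈ π, v (B ∪ T)) - 2 * v T)
        = 2 * (v (S ∪ T) - v T) := by linarith
    have hzero : ∑ π ∈ Pi2 S,
        p π * (2 * (v (S ∪ T) - v T) - ((∑ B ∈ π, v (B ∪ T)) - 2 * v T)) = 0 := by
      have : ∑ π ∈ Pi2 S, p π * (2 * (v (S ∪ T) - v T))
          = 2 * (v (S ∪ T) - v T) := by
        rw [← Finset.sum_mul, hp1, one_mul]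
      rw [Finset.sum_congr rfl fun π _ => mul_sub (p π) _ _,
        Finset.sum_sub_distrib, this, hsum_eq, sub_self]
    have heach := (Finset.sum_eq_zero_iff_of_nonneg ?_).1 hzero
    · have hP := heach _ hπ
      have hppos' := hppos _ hπ
      have hterm : (∑ B ∈ ({P, S \ P} : Finset (Finset ι)), v (B ∪ T)) - 2 * v T
          = 2 * (v (S ∪ T) - v T) := by
        rcases mul_eq_zero.1 hP with h0 | h0
        · exact absurd h0 (ne_of_gt hppos')
        · linarith
      rw [hsum P hPS hPne] at hterm
      have h1 := hsub P hPS
      have h2 := hsub (S \ P) (sdiff_subset)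
      linarith
    · intro π hπ'
      exact mul_nonneg (hppos π hπ').le (by linarith [hterm_le π hπ'])
  · intro h
    have hval : ∀ π ∈ Pi2 S,
        (∑ B ∈ π, v (B ∪ T)) - 2 * v T = 2 * (v (S ∪ T) - v T) := by
      intro π hπ
      obtain ⟨R, hR, hRne, hRS, rfl⟩ := Pi2_mem_iff.1 hπ
      rw [hsum R hR hRne]
      have h1 := h R hR hRne
      have hSRne : S \ R ≠ ∅ := by
        intro he
        exact hRS (subset_antisymm hR (sdiff_eq_empty_iff_subset.1 he))
      have h2 := h (S \ R) (sdiff_subset) hSRne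
      linarith
    rw [Finset.sum_congr rfl fun π hπ => by rw [hval π hπ]]
    rw [← Finset.sum_mul, hp1, one_mul]
    ring
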